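/- Every weakly cartesian natural transformation between finitary polynomial endofunctors on a slice of Set is cartesian. -/

import Mathlib

open CategoryTheory CategoryTheory.Limits

/-- A finitary polynomial diagram `O ← E → B → O` over the set `O`
(the middle map `p` has finite fibres). -/
structure PolyDiag (O : Type) : Type 1 where
  B : Type
  E : Type
  t : B → O
  p : E → B
  s : E → O
  fin : ∀ b, Finite {e : E // p e = b}

/-- The value of the polynomial functor `t_! p_* s*` on an object of `Set/O`. -/
def polyObj {O : Type} (D : PolyDiag O) (X : Over O) : Type :=
  Σ b : D.B, { v : {e : D.E // D.p e = b} → X.left // ∀ e, X.hom (v e) = D.s e.1 }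

/-- The polynomial functor `t_! ∘ p_* ∘ s* : Set/O ⥤ Set/O` associated to a polynomial
diagram. -/
def polyFunctor {O : Type} (D : PolyDiag O) : Over O ⥤ Over O where
  obj X := Over.mk (show polyObj D X ⟶ O from TypeCat.ofHom fun z => D.t z.1)
  map {X Y} g := Over.homMk
    (TypeCat.ofHom fun z => ⟨z.1, fun e => g.left (z.2.1 e), fun e => by
      rw [← z.2.2 e]; exact ConcreteCategory.congr_hom (Over.w g) (z.2.1 e)⟩)
    rfl
  map_id X := by
    apply CategoryTheory.Over.OverMorphism.ext
    ext z
    rfl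
  map_comp f g := by
    apply CategoryTheory.Over.OverMorphism.ext
    ext z
    rfl

/-- A natural transformation is cartesian when all its naturality squares are pullbacks. -/
def IsCartesianNT {C D : Type*} [Category C] [Category D] {F G : C ⥤ D} (τ : F ⟶ G) : Prop :=
  ∀ {X Y : C} (g : X ⟶ Y), IsPullback (F.map g) (τ.app X) (τ.app Y) (G.map g)

/-- A natural transformation between endofunctors on `Set/O` is weakly cartesian when
each naturality square is a weak pullback, i.e. the comparison map into the pullback is
surjective. -/
def IsWeaklyCartesianNT {O : Type} {F G : Over O ⥤ Over O} (τ : F ⟶ G) : Prop :=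
  ∀ {X Y : Over O} (g : X ⟶ Y) (a : (F.obj Y).left) (b : (G.obj X).left),
    (τ.app Y).left a = (G.map g).left b →
    ∃ w : (F.obj X).left, (F.map g).left w = a ∧ (τ.app X).left w = b

namespace WCPoly

variable {O : Type}

/-- element-level naturality in `Over O`. -/
lemma elem_nat {F G : Over O ⥤ Over O} (α : F ⟶ G) {X Y : Over O} (g : X ⟶ Y)
    (x : (F.obj X).left) :
    (α.app Y).left ((F.map g).left x) = (G.map g).left ((α.app X).left x) :=
  ConcreteCategory.congr_hom (congrArg CommaMorphism.left (α.naturality g)) x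

lemma elem_hom_inv {F F' : Over O ⥤ Over O} (i : F ≅ F') (X : Over O)
    (x : (F.obj X).left) :
    (i.inv.app X).left ((i.hom.app X).left x) = x :=
  ConcreteCategory.congr_hom (congrArg CommaMorphism.left (i.hom_inv_id_app X)) x

lemma elem_inv_hom {F F' : Over O ⥤ Over O} (i : F ≅ F') (X : Over O)
    (x : (F'.obj X).left) :
    (i.hom.app X).left ((i.inv.app X).left x) = x :=
  ConcreteCategory.congr_hom (congrArg CommaMorphism.left (i.inv_hom_id_app X)) x

/-- The fibre object `E_b` of a polynomial diagram, as an object of `Set/O`. -/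
def fiberObj (D : PolyDiag O) (b : D.B) : Over O :=
  Over.mk (TypeCat.ofHom (fun e : {e : D.E // D.p e = b} => D.s e.1))

/-- The generic element of `polyObj D (fiberObj D b)`. -/
def generic (D : PolyDiag O) (b : D.B) : polyObj D (fiberObj D b) :=
  ⟨b, ⟨fun e => e, fun _ => rfl⟩⟩

/-- A square in `Over O` whose underlying comparison map of sets is bijective
is a pullback square. -/
lemma isPullback_over {P X Y S : Over O} (fst : P ⟶ X) (snd : P ⟶ Y)
    (f : X ⟶ S) (g : Y ⟶ S) (w : fst ≫ f = snd ≫ g)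
    (hinj : ∀ a b : P.left, fst.left a = fst.left b → snd.left a = snd.left b → a = b)
    (hsurj : ∀ (x : X.left) (y : Y.left), f.left x = g.left y →
      ∃ p : P.left, fst.left p = x ∧ snd.left p = y) :
    IsPullback fst snd f g := by
  apply IsPullback.of_map (Over.forget O) w
  have w' : fst.left ≫ f.left = snd.left ≫ g.left :=
    congrArg CommaMorphism.left w
  have hbij : Function.Bijective (PullbackCone.mk fst.left snd.left w').toPullbackObj := by
    constructor
    · intro a b h
      exact hinj a b (congrArg (fun t => t.1.1) h) (congrArg (fun t => t.1.2) h)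
    · rintro ⟨⟨x, y⟩, hxy⟩
      obtain ⟨p, h1, h2⟩ := hsurj x y hxy
      exact ⟨p, Subtype.ext (Prod.ext h1 h2)⟩
  exact IsPullback.of_isLimit
    ((PullbackCone.isLimitEquivBijective (PullbackCone.mk fst.left snd.left w')).symm hbij)



/-- Congruence for second components of elements of `polyObj`. -/
lemma snd_congr {D : PolyDiag O} {X : Over O} {z z' : polyObj D X} (h : z = z')
    (hb : z.1 = z'.1) (e : {e // D.p e = z.1}) :
    z.2.1 e = z'.2.1 ⟨e.1, hb ▸ e.2⟩ := by
  subst h; rfl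

variable {D D' : PolyDiag O}

/-- The classifying element of a natural transformation between polynomial functors. -/
def xi (τ : polyFunctor D ⟶ polyFunctor D') (b : D.B) : polyObj D' (fiberObj D b) :=
  (τ.app (fiberObj D b)).left (generic D b)

/-- The element-level formula for a natural transformation between polynomial functors. -/
lemma tau_formula (τ : polyFunctor D ⟶ polyFunctor D') (X : Over O) (z : polyObj D X) :
    (τ.app X).left z =
      ⟨(xi τ z.1).1, ⟨fun e' => z.2.1 ((xi τ z.1).2.1 e'),
        fun e' => (z.2.2 _).trans ((xi τ z.1).2.2 e')⟩⟩ := by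
  let vh : fiberObj D z.1 ⟶ X := Over.homMk (TypeCat.ofHom z.2.1) (by ext e; exact z.2.2 e)
  have h := ConcreteCategory.congr_hom (congrArg CommaMorphism.left (τ.naturality vh)) (generic D z.1)
  exact h

/-- Weak cartesianness makes the classifying maps surjective. -/
lemma xi_surjective (τ : polyFunctor D ⟶ polyFunctor D')
    (hτ : ∀ {X Y : Over O} (g : X ⟶ Y) (a : ((polyFunctor D).obj Y).left)
      (b : ((polyFunctor D').obj X).left),
      (τ.app Y).left a = ((polyFunctor D').map g).left b →
      ∃ w, ((polyFunctor D).map g).left w = a ∧ (τ.app X).left w = b)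
    (b : D.B) : Function.Surjective (xi τ b).2.1 := by
  set Eb := fiberObj D b
  set u := (xi τ b).2.1
  intro e0
  let A : Over O := Over.mk (TypeCat.ofHom (fun x : {e : Eb.left // ∃ e', u e' = e} => D.s (x.1 : {e : D.E // D.p e = b}).1))
  let g : A ⟶ Eb := Over.homMk (TypeCat.ofHom fun x => x.1) rfl
  have hc : (τ.app Eb).left (generic D b) = ((polyFunctor D').map g).left
      ⟨(xi τ b).1, ⟨fun e' => ⟨u e', ⟨e', rfl⟩⟩, fun e' => (xi τ b).2.2 e'⟩⟩ := rfl
  obtain ⟨w, hw1, hw2⟩ := hτ g (generic D b) _ hc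
  have hfst : (((polyFunctor D).map g).left w).1 = b := congrArg Sigma.fst hw1
  have h5 := snd_congr hw1 hfst ⟨e0.1, e0.2.trans hfst.symm⟩
  have h6 : (w.2.1 ⟨e0.1, e0.2.trans hfst.symm⟩).1 = e0 := h5
  exact ⟨(w.2.1 ⟨e0.1, e0.2.trans hfst.symm⟩).2.choose,
    ((w.2.1 ⟨e0.1, e0.2.trans hfst.symm⟩).2.choose_spec).trans h6⟩

theorem core (τ : polyFunctor D ⟶ polyFunctor D')
    (hτ : ∀ {X Y : Over O} (g : X ⟶ Y) (a : ((polyFunctor D).obj Y).left)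
      (b : ((polyFunctor D').obj X).left),
      (τ.app Y).left a = ((polyFunctor D').map g).left b →
      ∃ w, ((polyFunctor D).map g).left w = a ∧ (τ.app X).left w = b)
    {X Y : Over O} (g : X ⟶ Y) :
    IsPullback ((polyFunctor D).map g) (τ.app X) (τ.app Y) ((polyFunctor D').map g) := by
  have hiso : True := trivial
  apply isPullback_over _ _ _ _ (τ.naturality g)
  · rintro (⟨b, v, hv⟩ : polyObj D X) (⟨b', v', hv'⟩ : polyObj D X) hF hτeq
    have h1 : b = b' := congrArg Sigma.fst hF
    subst h1
    replace hτeq := (tau_formula τ X ⟨b, ⟨v, hv⟩⟩).symm.trans (hτeq.trans (tau_formula τ X ⟨b, ⟨v', hv'⟩⟩))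
    have hvv : v = v' := by
      funext e0
      obtain ⟨e', rfl⟩ := xi_surjective τ hτ b e0
      exact snd_congr hτeq rfl e'
    subst hvv
    rfl
  · exact fun x y h => hτ g x y h


/-- Transfer weak cartesianness along isomorphisms of functors. -/
lemma weakly_transfer {F G : Over O ⥤ Over O}
    (iF : F ≅ polyFunctor D) (iG : G ≅ polyFunctor D') (τ : F ⟶ G)
    (hτ : ∀ {X Y : Over O} (g : X ⟶ Y) (a : (F.obj Y).left) (b : (G.obj X).left),
      (τ.app Y).left a = (G.map g).left b →
      ∃ w : (F.obj X).left, ((F.map g).left w = a ∧ (τ.app X).left w = b))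
    {X Y : Over O} (g : X ⟶ Y) (a : ((polyFunctor D).obj Y).left)
    (b : ((polyFunctor D').obj X).left)
    (hab : (((iF.inv ≫ τ ≫ iG.hom)).app Y).left a = ((polyFunctor D').map g).left b) :
    ∃ w, (((polyFunctor D).map g).left w = a ∧
      ((iF.inv ≫ τ ≫ iG.hom).app X).left w = b) := by
  set a' := (iF.inv.app Y).left a with ha'
  set b' := (iG.inv.app X).left b with hb'
  have hab' : (iG.hom.app Y).left ((τ.app Y).left a') = ((polyFunctor D').map g).left b := hab
  have hb : (τ.app Y).left a' = (G.map g).left b' := by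
    have h1 := congrArg ((iG.inv.app Y).left) hab'
    rw [elem_hom_inv] at h1
    rw [h1, hb']
    exact elem_nat iG.inv g b
  obtain ⟨w, hw1, hw2⟩ := hτ g a' b' hb
  refine ⟨(iF.hom.app X).left w, ?_, ?_⟩
  · have h2 := elem_nat iF.hom g w
    rw [hw1, ha'] at h2
    rw [← h2]
    exact elem_inv_hom iF Y a
  · show (iG.hom.app X).left ((τ.app X).left ((iF.inv.app X).left ((iF.hom.app X).left w))) = b
    rw [elem_hom_inv, hw2, hb']
    exact elem_inv_hom iG X b

end WCPoly

/-- Every weakly cartesian natural transformation between finitary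
polynomial endofunctors on a slice of `Set` (functors isomorphic to `t_! p_* s*` for
finitary polynomial diagrams) is cartesian. -/
theorem weakly_cartesian_of_polynomial_is_cartesian {O : Type}
    (F G : Over O ⥤ Over O)
    (hF : ∃ D : PolyDiag O, Nonempty (F ≅ polyFunctor D))
    (hG : ∃ D' : PolyDiag O, Nonempty (G ≅ polyFunctor D'))
    (τ : F ⟶ G) (hτ : IsWeaklyCartesianNT τ) :
    IsCartesianNT τ := by
  intro X Y g
  obtain ⟨D, ⟨iF⟩⟩ := hF
  obtain ⟨D', ⟨iG⟩⟩ := hG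
  have cσ := WCPoly.core (iF.inv ≫ τ ≫ iG.hom)
    (fun {X Y} g a b hab => WCPoly.weakly_transfer iF iG τ (fun g a b h => hτ g a b h) g a b hab)
    g
  have sq1 : IsPullback (F.map g) (iF.hom.app X) (iF.hom.app Y) ((polyFunctor D).map g) :=
    IsPullback.of_vert_isIso ⟨iF.hom.naturality g⟩
  have sq3 : IsPullback ((polyFunctor D').map g) (iG.inv.app X) (iG.inv.app Y) (G.map g) :=
    IsPullback.of_vert_isIso ⟨iG.inv.naturality g⟩
  have key := sq1.paste_vert (cσ.paste_vert sq3)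
  convert key using 1 <;> simp
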